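/- At every point ρ = (ρ₁,ρ₂) with ρ₁ > 0, ρ₂ > 0 and ρ₁+ρ₂ < 1 (i.e. in the interior of T), the speed function v is twice differentiable and the determinant of its Hessian is strictly negative: ∂²₁₁v(ρ)·∂²₂₂v(ρ) − (∂²₁₂v(ρ))² < 0. -/

import Mathlib

open Real

/-- The speed function of the Borodin-Ferrari dynamics, with the convention `v (0,0) = 0`. -/
noncomputable def speed (ρ : ℝ × ℝ) : ℝ :=
  if ρ = (0, 0) then 0
  else (1 / π) * (Real.sin (π * ρ.1) * Real.sin (π * ρ.2) / Real.sin (π * (ρ.1 + ρ.2)))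

/-- Partial derivative in the first coordinate of a function on `ℝ²`. -/
noncomputable def pd1 (f : ℝ × ℝ → ℝ) (ρ : ℝ × ℝ) : ℝ :=
  deriv (fun s => f (s, ρ.2)) ρ.1

/-- Partial derivative in the second coordinate of a function on `ℝ²`. -/
noncomputable def pd2 (f : ℝ × ℝ → ℝ) (ρ : ℝ × ℝ) : ℝ :=
  deriv (fun s => f (ρ.1, s)) ρ.2

lemma speed_eq : speed = fun ρ : ℝ × ℝ =>
    (1 / π) * (Real.sin (π * ρ.1) * Real.sin (π * ρ.2) / Real.sin (π * (ρ.1 + ρ.2))) := by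
  funext ρ
  unfold speed
  split_ifs with h
  · subst h; simp
  · rfl

lemma hasDerivAt_sinpi_add (c x : ℝ) :
    HasDerivAt (fun s : ℝ => Real.sin (π * (s + c))) (π * Real.cos (π * (x + c))) x := by
  have h := (Real.hasDerivAt_sin (π * (x + c))).comp x
    (((hasDerivAt_id x).add_const c).const_mul π)
  show HasDerivAt (Real.sin ∘ fun y => π * (y + c)) _ x
  exact h.congr_deriv (by ring)

lemma hasDerivAt_sinpi (x : ℝ) :
    HasDerivAt (fun s : ℝ => Real.sin (π * s)) (π * Real.cos (π * x)) x := by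
  simpa using hasDerivAt_sinpi_add 0 x

-- first partials
lemma d1 (x y : ℝ) (hne : Real.sin (π * (x + y)) ≠ 0) :
    HasDerivAt (fun s => speed (s, y))
      (Real.sin (π * y) ^ 2 / Real.sin (π * (x + y)) ^ 2) x := by
  rw [speed_eq]
  have h := ((((hasDerivAt_sinpi x).mul_const (Real.sin (π * y))).div
      (hasDerivAt_sinpi_add y x) hne).const_mul (1 / π))
  simp only [Pi.div_def] at h
  refine h.congr_deriv ?_
  symm
  have hsin : Real.sin (π * y) =
      Real.sin (π * (x + y)) * Real.cos (π * x) - Real.cos (π * (x + y)) * Real.sin (π * x) := by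
    rw [← Real.sin_sub]; ring_nf
  have hπ : (π : ℝ) ≠ 0 := Real.pi_ne_zero
  field_simp
  linear_combination (Real.sin (π * y)) * hsin

lemma d2 (x y : ℝ) (hne : Real.sin (π * (x + y)) ≠ 0) :
    HasDerivAt (fun s => speed (x, s))
      (Real.sin (π * x) ^ 2 / Real.sin (π * (x + y)) ^ 2) y := by
  rw [speed_eq]
  have hne' : Real.sin (π * (y + x)) ≠ 0 := by rwa [add_comm]
  have h := ((((hasDerivAt_sinpi y).const_mul (Real.sin (π * x))).div
      (hasDerivAt_sinpi_add x y) hne').const_mul (1 / π))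
  have heq : (fun s : ℝ => (1 / π) * (Real.sin (π * x) * Real.sin (π * s) / Real.sin (π * (s + x))))
      = (fun s : ℝ => (1 / π) * (Real.sin (π * x) * Real.sin (π * s) / Real.sin (π * (x + s)))) := by
    funext s; rw [add_comm]
  simp only [Pi.div_def] at h
  rw [heq] at h
  refine h.congr_deriv ?_
  symm
  rw [show π * (y + x) = π * (x + y) by ring]
  have hsin : Real.sin (π * x) =
      Real.sin (π * (x + y)) * Real.cos (π * y) - Real.cos (π * (x + y)) * Real.sin (π * y) := by
    rw [← Real.sin_sub]; ring_nf
  have hπ : (π : ℝ) ≠ 0 := Real.pi_ne_zero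
  field_simp
  linear_combination (Real.sin (π * x)) * hsin

/-- In the interior of `T`, the speed function is twice differentiable and the
determinant of its Hessian is strictly negative (AKPZ class). -/
theorem stmt5 (ρ : ℝ × ℝ) (h1 : 0 < ρ.1) (h2 : 0 < ρ.2) (h3 : ρ.1 + ρ.2 < 1) :
    ContDiffAt ℝ 2 speed ρ ∧
    pd1 (pd1 speed) ρ * pd2 (pd2 speed) ρ - (pd1 (pd2 speed) ρ) ^ 2 < 0 := by
  obtain ⟨x, y⟩ := ρ
  simp only at h1 h2 h3
  have hπ := Real.pi_pos
  have hx1 : x < 1 := by linarith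
  have hy1 : y < 1 := by linarith
  have hsa : 0 < Real.sin (π * x) :=
    Real.sin_pos_of_pos_of_lt_pi (by positivity) (by nlinarith)
  have hsb : 0 < Real.sin (π * y) :=
    Real.sin_pos_of_pos_of_lt_pi (by positivity) (by nlinarith)
  have hss : 0 < Real.sin (π * (x + y)) :=
    Real.sin_pos_of_pos_of_lt_pi (by positivity) (by nlinarith)
  have hne : Real.sin (π * (x + y)) ≠ 0 := ne_of_gt hss
  have hne' : Real.sin (π * (y + x)) ≠ 0 := by rwa [add_comm]
  constructor
  · rw [speed_eq]
    have hq : ContDiffAt ℝ 2 (fun ρ : ℝ × ℝ =>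
        Real.sin (π * ρ.1) * Real.sin (π * ρ.2) / Real.sin (π * (ρ.1 + ρ.2))) (x, y) :=
      ContDiffAt.div
        (((Real.contDiff_sin.comp (contDiff_const.mul contDiff_fst)).mul
          (Real.contDiff_sin.comp (contDiff_const.mul contDiff_snd))).contDiffAt)
        ((Real.contDiff_sin.comp
          (contDiff_const.mul (contDiff_fst.add contDiff_snd))).contDiffAt) hne
    exact contDiffAt_const.mul hq
  · have hcont1 : ContinuousAt (fun s : ℝ => Real.sin (π * (s + y))) x :=
      (hasDerivAt_sinpi_add y x).continuousAt
    have hcont2 : ContinuousAt (fun s : ℝ => Real.sin (π * (x + s))) y := by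
      have h0 : ContinuousAt (fun s : ℝ => Real.sin (π * (s + x))) y :=
        (hasDerivAt_sinpi_add x y).continuousAt
      have : (fun s : ℝ => Real.sin (π * (x + s))) = fun s : ℝ => Real.sin (π * (s + x)) := by
        funext s; rw [add_comm]
      rw [this]; exact h0
    have hev1 : ∀ᶠ s in nhds x, Real.sin (π * (s + y)) ≠ 0 := hcont1.eventually_ne hne
    have hev2 : ∀ᶠ s in nhds y, Real.sin (π * (x + s)) ≠ 0 := hcont2.eventually_ne hne
    -- pd1 pd1
    have e11 : pd1 (pd1 speed) (x, y) =
        -(2 * π) * Real.sin (π * y) ^ 2 * Real.cos (π * (x + y)) / Real.sin (π * (x + y)) ^ 3 := by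
      have heq : (fun s => pd1 speed (s, y)) =ᶠ[nhds x]
          (fun s => Real.sin (π * y) ^ 2 / Real.sin (π * (s + y)) ^ 2) := by
        filter_upwards [hev1] with s hs
        exact (d1 s y hs).deriv
      rw [pd1, heq.deriv_eq]
      have h := ((hasDerivAt_const x (Real.sin (π * y) ^ 2)).div
        ((hasDerivAt_sinpi_add y x).pow 2) (pow_ne_zero 2 hne)).deriv
      simp only [Pi.div_def, Pi.pow_def] at h
      rw [h]
      push_cast
      field_simp
      ring
    -- pd2 pd2
    have e22 : pd2 (pd2 speed) (x, y) =
        -(2 * π) * Real.sin (π * x) ^ 2 * Real.cos (π * (x + y)) / Real.sin (π * (x + y)) ^ 3 := by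
      have heq : (fun s => pd2 speed (x, s)) =ᶠ[nhds y]
          (fun s => Real.sin (π * x) ^ 2 / Real.sin (π * (s + x)) ^ 2) := by
        filter_upwards [hev2] with s hs
        rw [show Real.sin (π * (s + x)) = Real.sin (π * (x + s)) from by rw [add_comm]]
        exact (d2 x s hs).deriv
      rw [pd2, heq.deriv_eq]
      have h := ((hasDerivAt_const y (Real.sin (π * x) ^ 2)).div
        ((hasDerivAt_sinpi_add x y).pow 2) (pow_ne_zero 2 hne')).deriv
      simp only [Pi.div_def, Pi.pow_def] at h
      rw [h, show π * (y + x) = π * (x + y) by ring]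
      push_cast
      field_simp
      ring
    -- pd1 pd2
    have e12 : pd1 (pd2 speed) (x, y) =
        2 * π * Real.sin (π * x) * Real.sin (π * y) / Real.sin (π * (x + y)) ^ 3 := by
      have heq : (fun s => pd2 speed (s, y)) =ᶠ[nhds x]
          (fun s => Real.sin (π * s) ^ 2 / Real.sin (π * (s + y)) ^ 2) := by
        filter_upwards [hev1] with s hs
        exact (d2 s y hs).deriv
      rw [pd1, heq.deriv_eq]
      have h := (((hasDerivAt_sinpi x).pow 2).div
        ((hasDerivAt_sinpi_add y x).pow 2) (pow_ne_zero 2 hne)).deriv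
      simp only [Pi.div_def, Pi.pow_def] at h
      rw [h]
      have hsin : Real.sin (π * y) =
          Real.sin (π * (x + y)) * Real.cos (π * x) - Real.cos (π * (x + y)) * Real.sin (π * x) := by
        rw [← Real.sin_sub]; ring_nf
      push_cast
      field_simp
      linear_combination (-1 : ℝ) * hsin
    rw [e11, e22, e12]
    have hcos : Real.cos (π * (x + y)) ^ 2 < 1 := by
      nlinarith [Real.sin_sq_add_cos_sq (π * (x + y))]
    have key : -(2 * π) * Real.sin (π * y) ^ 2 * Real.cos (π * (x + y)) / Real.sin (π * (x + y)) ^ 3 *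
          (-(2 * π) * Real.sin (π * x) ^ 2 * Real.cos (π * (x + y)) / Real.sin (π * (x + y)) ^ 3) -
          (2 * π * Real.sin (π * x) * Real.sin (π * y) / Real.sin (π * (x + y)) ^ 3) ^ 2 =
        (4 * π ^ 2 * Real.sin (π * x) ^ 2 * Real.sin (π * y) ^ 2 *
          (Real.cos (π * (x + y)) ^ 2 - 1)) / Real.sin (π * (x + y)) ^ 6 := by
      field_simp
      ring
    rw [key]
    apply div_neg_of_neg_of_pos
    · have h4 : 0 < 4 * π ^ 2 * Real.sin (π * x) ^ 2 * Real.sin (π * y) ^ 2 := by positivity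
      nlinarith
    · positivity
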